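/- In the hyperbolic upper half-plane ℍ = {z ∈ ℂ : Im z > 0} with hyperbolic distance dist(z,w) = arcosh(1 + |z−w|²/(2·Im z·Im w)), there exist constants α > 0 and β > 0 such that for every positive integer k the open sets U_i := {z ∈ ℍ : |z| < 2^{-i}} (where |z| is the Euclidean modulus), i = 1, …, k, together with the track points x_i := 2^{-i}·i on the imaginary axis, form a Φ-chain with respect to the hyperbolic metric for the linear function Φ(t) = α·t + β, where the boundaries ∂U_i are taken inside ℍ. -/

import Mathlib

/-- The sets `U i` with track points `p i`, for indices `lo ≤ i ≤ hi`, form a `Φ`-chain: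
the `U i` are open and nested, `p i ∈ ∂U i`, consecutive track points have distance
between `Φ 0` and `3 * Φ 0`, and every `x ∈ ∂U i` satisfies
`d(x, ∂U (i±1)) ≥ Φ (d(x, p i))`. -/
def IsPhiChainOn {X : Type*} [MetricSpace X] (Φ : ℝ → ℝ) (U : ℕ → Set X) (p : ℕ → X)
    (lo hi : ℕ) : Prop :=
  (∀ i, lo ≤ i → i ≤ hi → IsOpen (U i)) ∧
  (∀ i, lo ≤ i → i < hi → U (i + 1) ⊆ U i) ∧
  (∀ i, lo ≤ i → i ≤ hi → p i ∈ frontier (U i)) ∧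
  (∀ i, lo ≤ i → i < hi →
    Φ 0 ≤ dist (p i) (p (i + 1)) ∧ dist (p i) (p (i + 1)) ≤ 3 * Φ 0) ∧
  (∀ i, lo ≤ i → i < hi → ∀ x ∈ frontier (U i),
    Φ (dist x (p i)) ≤ Metric.infDist x (frontier (U (i + 1)))) ∧
  (∀ i, lo < i → i ≤ hi → ∀ x ∈ frontier (U i),
    Φ (dist x (p i)) ≤ Metric.infDist x (frontier (U (i - 1))))

open Real Filter Topology

private lemma hypU_open (r : ℝ) :
    IsOpen {z : UpperHalfPlane | ‖(z : ℂ)‖ < r} := by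
  have h : {z : UpperHalfPlane | ‖(z : ℂ)‖ < r} =
      ((↑) : UpperHalfPlane → ℂ) ⁻¹' (Metric.ball 0 r) := by
    ext z; simp [Metric.mem_ball, Complex.dist_eq]
  rw [h]
  exact Metric.isOpen_ball.preimage UpperHalfPlane.continuous_coe

private lemma hypU_frontier_subset {r : ℝ} :
    frontier {z : UpperHalfPlane | ‖(z : ℂ)‖ < r} ⊆
      {z : UpperHalfPlane | ‖(z : ℂ)‖ = r} := by
  intro z hz
  have hcl : closure {z : UpperHalfPlane | ‖(z : ℂ)‖ < r} ⊆
      {z : UpperHalfPlane | ‖(z : ℂ)‖ ≤ r} := by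
    have hsub : {z : UpperHalfPlane | ‖(z : ℂ)‖ < r} ⊆
        {z : UpperHalfPlane | ‖(z : ℂ)‖ ≤ r} :=
      fun w (hw : ‖(w : ℂ)‖ < r) => show ‖(w : ℂ)‖ ≤ r from hw.le
    apply closure_minimal hsub
    have h : {z : UpperHalfPlane | ‖(z : ℂ)‖ ≤ r} =
        ((↑) : UpperHalfPlane → ℂ) ⁻¹' (Metric.closedBall 0 r) := by
      ext w; simp [Metric.mem_closedBall, Complex.dist_eq]
    rw [h]
    exact Metric.isClosed_closedBall.preimage UpperHalfPlane.continuous_coe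
  have h1 : ‖(z : ℂ)‖ ≤ r := hcl hz.1
  have h2 : ¬ ‖(z : ℂ)‖ < r := by
    have := hz.2
    rwa [(hypU_open r).interior_eq] at this
  exact le_antisymm h1 (not_lt.mp h2)

private lemma hypU_mem_frontier {r : ℝ} {z : UpperHalfPlane}
    (hz : ‖(z : ℂ)‖ = r) :
    z ∈ frontier {z : UpperHalfPlane | ‖(z : ℂ)‖ < r} := by
  have hr : 0 < r := by
    rw [← hz]; exact norm_pos_iff.mpr z.ne_zero
  constructor
  · -- closure membership via the sequence (1 - 1/(n+2)) • z
    have him : 0 < (z : ℂ).im := z.im_pos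
    have hcpos : ∀ n : ℕ, 0 < (1 - 1 / (n + 2) : ℝ) := by
      intro n
      have h2 : (1 : ℝ) / (n + 2) < 1 := by
        rw [div_lt_one (by positivity)]
        have : (0:ℝ) ≤ n := Nat.cast_nonneg n
        linarith
      linarith
    have hclt : ∀ n : ℕ, (1 - 1 / (n + 2) : ℝ) < 1 := by
      intro n
      have : (0:ℝ) < 1 / (n + 2) := by positivity
      linarith
    set q : ℕ → UpperHalfPlane := fun n =>
      ⟨((1 - 1 / (n + 2) : ℝ) : ℂ) * z, by
        have h := Complex.mul_im (((1 - 1 / (n + 2) : ℝ)) : ℂ) (z : ℂ)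
        rw [h, Complex.ofReal_re, Complex.ofReal_im, zero_mul, add_zero]
        exact mul_pos (hcpos n) him⟩ with hq
    have htend : Tendsto q atTop (𝓝 z) := by
      rw [UpperHalfPlane.isEmbedding_coe.tendsto_nhds_iff]
      have h1 : Tendsto (fun n : ℕ => ((n : ℝ) + 2)) atTop atTop :=
        tendsto_atTop_add_const_right _ 2 tendsto_natCast_atTop_atTop
      have h2 : Tendsto (fun n : ℕ => (1 - 1 / (n + 2) : ℝ)) atTop (𝓝 1) := by
        have h3 := tendsto_inv_atTop_zero.comp h1
        have h4 : Tendsto (fun n : ℕ => (1 / (n + 2) : ℝ)) atTop (𝓝 0) := by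
          simpa [one_div, Function.comp_def] using h3
        simpa using tendsto_const_nhds.sub h4
      have h5 : Tendsto (fun n : ℕ => (((1 - 1 / (n + 2) : ℝ)) : ℂ)) atTop (𝓝 1) := by
        have := (Complex.continuous_ofReal.tendsto 1).comp h2
        simpa [Function.comp_def] using this
      have h6 : Tendsto (fun n : ℕ => ((1 - 1 / (n + 2) : ℝ) : ℂ) * (z : ℂ)) atTop
          (𝓝 ((1 : ℂ) * (z : ℂ))) := h5.mul_const _
      rw [one_mul] at h6
      exact h6
    have hmem : ∀ᶠ n in atTop, q n ∈ {w : UpperHalfPlane | ‖(w : ℂ)‖ < r} := by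
      filter_upwards with n
      show ‖((q n : ℂ))‖ < r
      have : (q n : ℂ) = ((1 - 1 / (n + 2) : ℝ) : ℂ) * z := rfl
      rw [this, norm_mul, Complex.norm_real, Real.norm_eq_abs, abs_of_pos (hcpos n), hz]
      nlinarith [hclt n, hcpos n]
    exact mem_closure_of_tendsto htend hmem
  · rw [(hypU_open r).interior_eq]
    simp [hz]

private lemma aux_main {x y p : UpperHalfPlane} {r : ℝ} (hr : 0 < r)
    (hx : ‖(x : ℂ)‖ = r)
    (hy : ‖(y : ℂ)‖ = r / 2 ∨ ‖(y : ℂ)‖ = 2 * r)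
    (hp : (p : ℂ) = (r : ℂ) * Complex.I) :
    1 / 12 * dist x p + 2 / 3 * Real.log 2 ≤ dist x y := by
  have hxim : 0 < x.im := x.im_pos
  have hyim : 0 < y.im := y.im_pos
  have hxim_le : x.im ≤ r := by
    have h1 := Complex.abs_im_le_norm (x : ℂ)
    rw [hx] at h1
    calc x.im = (x : ℂ).im := (UpperHalfPlane.coe_im x).symm
    _ ≤ |(x : ℂ).im| := le_abs_self _
    _ ≤ r := h1
  have hyim_le : y.im ≤ ‖(y : ℂ)‖ := by
    calc y.im = (y : ℂ).im := (UpperHalfPlane.coe_im y).symm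
    _ ≤ |(y : ℂ).im| := le_abs_self _
    _ ≤ _ := Complex.abs_im_le_norm _
  have habs : |‖(x : ℂ)‖ - ‖(y : ℂ)‖| ≤ ‖((x : ℂ) - (y : ℂ))‖ :=
    abs_norm_sub_norm_le _ _
  have hkey : 1 / 2 * r * y.im ≤ dist (x : ℂ) (y : ℂ) ^ 2 := by
    rw [Complex.dist_eq]
    rcases hy with h | h
    · rw [hx, h] at habs
      have h1 : r / 2 ≤ ‖((x : ℂ) - (y : ℂ))‖ := by
        have : r - r / 2 ≤ |r - r / 2| := le_abs_self _
        linarith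
      have h2 : y.im ≤ r / 2 := hyim_le.trans_eq h
      nlinarith
    · rw [hx, h] at habs
      have h1 : r ≤ ‖((x : ℂ) - (y : ℂ))‖ := by
        have : -(r - 2 * r) ≤ |r - 2 * r| := neg_le_abs _
        linarith
      have h2 : y.im ≤ 2 * r := hyim_le.trans_eq h
      nlinarith
  set C := r / x.im with hC
  have hC1 : 1 ≤ C := (one_le_div hxim).2 hxim_le
  have hcoshd : 1 + C / 4 ≤ Real.cosh (dist x y) := by
    rw [UpperHalfPlane.cosh_dist]
    have h1 : r / (4 * x.im) ≤ dist (x : ℂ) (y : ℂ) ^ 2 / (2 * x.im * y.im) := by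
      rw [div_le_div_iff₀ (by positivity) (by positivity)]
      nlinarith
    have h2 : C / 4 = r / (4 * x.im) := by rw [hC]; ring
    have : dist (x : ℂ) (y : ℂ) = dist (x : ℂ) ↑y := rfl
    linarith [h1]
  have hd0 : (0:ℝ) ≤ dist x y := dist_nonneg
  have hA : Real.log 2 ≤ dist x y := by
    rw [Real.log_le_iff_le_exp (by norm_num)]
    have hu1 : 1 ≤ Real.exp (dist x y) := Real.one_le_exp hd0
    have hcosh := Real.cosh_eq (dist x y)
    have hneg : Real.exp (-(dist x y)) = (Real.exp (dist x y))⁻¹ := Real.exp_neg _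
    set u := Real.exp (dist x y) with hu
    have hu0 : 0 < u := Real.exp_pos _
    have h54 : 5 / 4 ≤ (u + u⁻¹) / 2 := by
      rw [← hneg, ← hcosh]; linarith
    have hinv : u * u⁻¹ = 1 := mul_inv_cancel₀ (ne_of_gt hu0)
    nlinarith [mul_pos hu0 hu0]
  have hcoshg : Real.cosh (dist x p) = C := by
    rw [UpperHalfPlane.cosh_dist]
    have hpim : p.im = r := by
      rw [← UpperHalfPlane.coe_im, hp]; simp
    have hsq : dist (x : ℂ) (p : ℂ) ^ 2 = 2 * r ^ 2 - 2 * r * x.im := by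
      rw [Complex.dist_eq, Complex.sq_norm, hp]
      have hnormx : (x : ℂ).re ^ 2 + (x : ℂ).im ^ 2 = r ^ 2 := by
        have h1 := Complex.sq_norm (x : ℂ)
        rw [hx, Complex.normSq_apply] at h1
        nlinarith
      have hx_im : (x : ℂ).im = x.im := UpperHalfPlane.coe_im x
      simp only [Complex.normSq_apply, Complex.sub_re, Complex.sub_im, Complex.mul_re,
        Complex.mul_im, Complex.I_re, Complex.I_im, Complex.ofReal_re, Complex.ofReal_im]
      rw [hx_im] at hnormx ⊢
      nlinarith
    rw [hpim, hsq, hC]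
    field_simp
    ring
  have hexpg : Real.exp (dist x p) ≤ 2 * C := by
    have h1 := Real.sinh_add_cosh (dist x p)
    have h2 := Real.cosh_sub_sinh (dist x p)
    have h3 := Real.exp_pos (-(dist x p))
    linarith [hcoshg]
  have hB : dist x p - 3 * Real.log 2 ≤ dist x y := by
    have hcoshd' : Real.cosh (dist x y) ≤ Real.exp (dist x y) := by
      have h1 := Real.sinh_add_cosh (dist x y)
      have h2 : 0 ≤ Real.sinh (dist x y) := by
        rw [← Real.sinh_zero]
        exact Real.sinh_le_sinh.mpr hd0
      linarith
    have hexp : Real.exp (dist x p - 3 * Real.log 2) ≤ Real.exp (dist x y) := by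
      have e8 : Real.exp (3 * Real.log 2) = 8 := by
        have h38 : (3:ℝ) * Real.log 2 = Real.log 8 := by
          rw [show (8:ℝ) = 2 ^ (3:ℕ) by norm_num, Real.log_pow]
          push_cast; ring
        rw [h38, Real.exp_log (by norm_num)]
      rw [Real.exp_sub, e8]
      linarith
    exact Real.exp_le_exp.mp hexp
  linarith [hA, hB]

/-- **A Φ-chain in the hyperbolic upper half-plane.** There are constants `α, β > 0` such
that for every positive integer `k`, the sets `U_i = {z ∈ ℍ : |z| < 2^{-i}}` (Euclidean
modulus) with track points `x_i = 2^{-i}·i` on the imaginary axis, `i = 1, …, k`, form a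
`Φ`-chain for `Φ(t) = α·t + β` with respect to the hyperbolic metric of `ℍ`, where the
boundaries `∂U_i` are taken inside `ℍ`. -/
theorem phi_chain_in_upper_half_plane :
    ∃ α β : ℝ, 0 < α ∧ 0 < β ∧
      ∀ k : ℕ, 0 < k →
        IsPhiChainOn (fun t => α * t + β)
          (fun i => {z : UpperHalfPlane | ‖(z : ℂ)‖ < (2 : ℝ) ^ (-(i : ℤ))})
          (fun i => (⟨((2 : ℝ) ^ (-(i : ℤ)) : ℝ) * Complex.I, by
            rw [Complex.mul_I_im, Complex.ofReal_re]
            exact zpow_pos (by norm_num : (0:ℝ) < 2) (-(i : ℤ))⟩ :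
            UpperHalfPlane))
          1 k := by
  have hlog2 : 0 < Real.log 2 := Real.log_pos (by norm_num)
  refine ⟨1 / 12, 2 / 3 * Real.log 2, by norm_num, by positivity, ?_⟩
  intro k hk
  set r : ℕ → ℝ := fun i => (2 : ℝ) ^ (-(i : ℤ)) with hrdef
  have hrpos : ∀ i, 0 < r i := fun i => zpow_pos (by norm_num) _
  set p : ℕ → UpperHalfPlane := fun i => (⟨((2 : ℝ) ^ (-(i : ℤ)) : ℝ) * Complex.I, by
            rw [Complex.mul_I_im, Complex.ofReal_re]
            exact zpow_pos (by norm_num : (0:ℝ) < 2) (-(i : ℤ))⟩ : UpperHalfPlane) with hpdef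
  have hpabs : ∀ i, ‖((p i : ℂ))‖ = r i := by
    intro i
    show ‖(((2 : ℝ) ^ (-(i : ℤ)) : ℝ) * Complex.I)‖ = r i
    rw [norm_mul, Complex.norm_I, Complex.norm_real, Real.norm_eq_abs, abs_of_pos (hrpos i), mul_one]
  have hpcoe : ∀ i, (p i : ℂ) = ((r i : ℝ) : ℂ) * Complex.I := fun i => rfl
  have hrsucc : ∀ i : ℕ, r (i + 1) = r i / 2 := by
    intro i
    show (2:ℝ) ^ (-((i+1 : ℕ) : ℤ)) = (2:ℝ) ^ (-(i : ℤ)) / 2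
    rw [show (-((i+1 : ℕ) : ℤ)) = -(i:ℤ) + (-1) by push_cast; ring,
      zpow_add₀ (by norm_num : (2:ℝ) ≠ 0)]
    norm_num
    ring
  have hrpred : ∀ i : ℕ, 1 ≤ i → r (i - 1) = 2 * r i := by
    intro i hi
    show (2:ℝ) ^ (-((i-1 : ℕ) : ℤ)) = 2 * (2:ℝ) ^ (-(i : ℤ))
    rw [show (-((i-1 : ℕ) : ℤ)) = -(i:ℤ) + 1 by
        rw [Nat.cast_sub hi]; push_cast; ring,
      zpow_add₀ (by norm_num : (2:ℝ) ≠ 0)]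
    ring
  refine ⟨fun i _ _ => hypU_open _, ?_, ?_, ?_, ?_, ?_⟩
  · intro i _ _ z hz
    have hle : r (i + 1) ≤ r i := by rw [hrsucc]; linarith [hrpos i]
    exact lt_of_lt_of_le hz hle
  · intro i _ _
    exact hypU_mem_frontier (hpabs i)
  · intro i _ _
    have hre : (p i).re = (p (i + 1)).re := by
      show ((p i : ℂ)).re = ((p (i + 1) : ℂ)).re
      rw [hpcoe, hpcoe]; simp
    have hdist : dist (p i) (p (i + 1)) = Real.log 2 := by
      rw [UpperHalfPlane.dist_of_re_eq hre]
      have him : ∀ j, (p j).im = r j := by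
        intro j
        rw [← UpperHalfPlane.coe_im, hpcoe]; simp
      rw [him, him, Real.dist_eq]
      show |Real.log ((2:ℝ) ^ (-(i : ℤ))) - Real.log ((2:ℝ) ^ (-((i+1:ℕ) : ℤ)))| = Real.log 2
      rw [Real.log_zpow, Real.log_zpow]
      push_cast
      rw [show (-(i:ℝ)) * Real.log 2 - (-((i:ℝ)+1)) * Real.log 2 = Real.log 2 by ring]
      exact abs_of_pos hlog2
    rw [hdist]
    constructor <;> simp <;> linarith
  · intro i _ _ x hx
    have hxabs : ‖(x : ℂ)‖ = r i := hypU_frontier_subset hx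
    have hne : (frontier {z : UpperHalfPlane |
        ‖(z : ℂ)‖ < (2 : ℝ) ^ (-((i+1 : ℕ) : ℤ))}).Nonempty :=
      ⟨p (i + 1), hypU_mem_frontier (hpabs (i + 1))⟩
    by_contra hcon
    push_neg at hcon
    rw [Metric.infDist_lt_iff hne] at hcon
    obtain ⟨y, hy, hlt⟩ := hcon
    have hyabs : ‖(y : ℂ)‖ = r i / 2 := by
      rw [← hrsucc]; exact hypU_frontier_subset hy
    have hmain := aux_main (hrpos i) hxabs (Or.inl hyabs) (hpcoe i)
    have hlt' : dist x y < 1 / 12 * dist x (p i) + 2 / 3 * Real.log 2 := hlt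
    linarith
  · intro i hi _ x hx
    have hxabs : ‖(x : ℂ)‖ = r i := hypU_frontier_subset hx
    have hne : (frontier {z : UpperHalfPlane |
        ‖(z : ℂ)‖ < (2 : ℝ) ^ (-((i-1 : ℕ) : ℤ))}).Nonempty :=
      ⟨p (i - 1), hypU_mem_frontier (hpabs (i - 1))⟩
    by_contra hcon
    push_neg at hcon
    rw [Metric.infDist_lt_iff hne] at hcon
    obtain ⟨y, hy, hlt⟩ := hcon
    have hyabs : ‖(y : ℂ)‖ = 2 * r i := by
      rw [← hrpred i (by omega)]; exact hypU_frontier_subset hy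
    have hmain := aux_main (hrpos i) hxabs (Or.inr hyabs) (hpcoe i)
    have hlt' : dist x y < 1 / 12 * dist x (p i) + 2 / 3 * Real.log 2 := hlt
    linarith
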